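/- Let X be a finite set with |X| = K and let ψ : X → ℂ^(2^s) map each element to a unit vector such that |⟨ψ(w)|ψ(w')⟩| ≤ δ for all distinct w, w' ∈ X, where δ ∈ (0,1/2). Then s ≥ log₂ log₂ K − log₂ log₂ (1 + √(2/(1−δ))) − 1. -/

import Mathlib

open scoped InnerProductSpace ENNReal

open MeasureTheory Metric in
lemma packing_aux {d : ℕ} (hd : 0 < d) {X : Type*} [Fintype X]
    (φ : X → EuclideanSpace ℝ (Fin d)) (r : ℝ) (hr : 0 < r)
    (hnorm : ∀ w, ‖φ w‖ = 1)
    (hdist : ∀ w w', w ≠ w' → 2 * r ≤ dist (φ w) (φ w')) :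
    (Fintype.card X : ℝ) * r ^ d ≤ (1 + r) ^ d := by
  haveI : Nontrivial (EuclideanSpace ℝ (Fin d)) :=
    Module.nontrivial_of_finrank_pos (R := ℝ) (by rw [finrank_euclideanSpace_fin]; exact hd)
  set V := volume (ball (0 : EuclideanSpace ℝ (Fin d)) 1) with hV
  have hV0 : V ≠ 0 := (measure_ball_pos volume 0 one_pos).ne'
  have hVtop : V ≠ ⊤ := measure_ball_lt_top.ne
  have hfr : Module.finrank ℝ (EuclideanSpace ℝ (Fin d)) = d := finrank_euclideanSpace_fin
  have hballvol : ∀ w, volume (ball (φ w) r) = ENNReal.ofReal (r ^ d) * V := by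
    intro w
    have := Measure.addHaar_ball (volume : Measure (EuclideanSpace ℝ (Fin d))) (φ w) hr.le
    rwa [hfr] at this
  have hdisj : Pairwise (Function.onFun Disjoint fun w => ball (φ w) r) := by
    intro w w' hww'
    exact ball_disjoint_ball (by linarith [hdist w w' hww'])
  have hsub : (⋃ w, ball (φ w) r) ⊆ ball (0 : EuclideanSpace ℝ (Fin d)) (1 + r) := by
    intro x hx
    obtain ⟨w, hw⟩ := Set.mem_iUnion.1 hx
    rw [mem_ball] at hw ⊢
    calc dist x 0 ≤ dist x (φ w) + dist (φ w) 0 := dist_triangle _ _ _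
      _ < r + 1 := by
          rw [dist_zero_right, hnorm w]
          linarith
      _ = 1 + r := by ring
  have hunion : volume (⋃ w, ball (φ w) r) = ∑' w, volume (ball (φ w) r) :=
    measure_iUnion hdisj fun w => measurableSet_ball
  have hsum : ∑' w, volume (ball (φ w) r)
      = (Fintype.card X : ℝ≥0∞) * (ENNReal.ofReal (r ^ d) * V) := by
    rw [tsum_fintype]
    simp [hballvol, Finset.sum_const, nsmul_eq_mul]
  have hbig : volume (ball (0 : EuclideanSpace ℝ (Fin d)) (1 + r))
      = ENNReal.ofReal ((1 + r) ^ d) * V := by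
    have := Measure.addHaar_ball (volume : Measure (EuclideanSpace ℝ (Fin d))) 0
      (by linarith : (0:ℝ) ≤ 1 + r)
    rwa [hfr] at this
  have hle : (Fintype.card X : ℝ≥0∞) * ENNReal.ofReal (r ^ d) * V
      ≤ ENNReal.ofReal ((1 + r) ^ d) * V := by
    rw [mul_assoc, ← hsum, ← hunion, ← hbig]
    exact measure_mono hsub
  have hle2 : (Fintype.card X : ℝ≥0∞) * ENNReal.ofReal (r ^ d)
      ≤ ENNReal.ofReal ((1 + r) ^ d) :=
    (ENNReal.mul_le_mul_iff_left hV0 hVtop).1 hle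
  have hcast : (Fintype.card X : ℝ≥0∞) * ENNReal.ofReal (r ^ d)
      = ENNReal.ofReal ((Fintype.card X : ℝ) * r ^ d) := by
    rw [ENNReal.ofReal_mul (by positivity), ENNReal.ofReal_natCast]
  rw [hcast] at hle2
  exact (ENNReal.ofReal_le_ofReal_iff (by positivity)).1 hle2

theorem stmt_1 {X : Type*} [Fintype X] (K : ℕ) (hK : Fintype.card X = K)
    (s : ℕ) (δ : ℝ) (hδ0 : 0 < δ) (hδ1 : δ < 1/2)
    (ψ : X → EuclideanSpace ℂ (Fin (2^s)))
    (hunit : ∀ w, ‖ψ w‖ = 1)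
    (hres : ∀ w w', w ≠ w' → ‖(⟪ψ w, ψ w'⟫_ℂ)‖ ≤ δ) :
    (s : ℝ) ≥ Real.logb 2 (Real.logb 2 K)
      - Real.logb 2 (Real.logb 2 (1 + Real.sqrt (2 / (1 - δ)))) - 1 := by
  set c : ℝ := 1 + Real.sqrt (2 / (1 - δ)) with hc
  have h1δ : (0:ℝ) < 1 - δ := by linarith
  have hgt2 : (2:ℝ) < 2 / (1 - δ) := by
    rw [lt_div_iff₀ h1δ]; nlinarith
  have hc2 : 2 < c := by
    have h1 : Real.sqrt 2 ≤ Real.sqrt (2 / (1 - δ)) := Real.sqrt_le_sqrt hgt2.le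
    have h2 : (1.414 : ℝ) < Real.sqrt 2 := by
      rw [show (1.414:ℝ) = Real.sqrt (1.414^2) by
        rw [Real.sqrt_sq]; norm_num]
      exact Real.sqrt_lt_sqrt (by norm_num) (by norm_num)
    simp only [hc]; linarith
  have hL1 : 1 < Real.logb 2 c := by
    have := Real.logb_lt_logb (b := 2) (by norm_num) (by norm_num) hc2
    rwa [Real.logb_self_eq_one (by norm_num)] at this
  have hL0 : 0 < Real.logb 2 c := by linarith
  -- main packing bound : K ≤ c ^ (2^(s+1))
  have hKbound : (K : ℝ) ≤ c ^ (2^(s+1)) := by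
    set d := Module.finrank ℝ (EuclideanSpace ℂ (Fin (2^s))) with hd
    have hdval : d = 2^(s+1) := by
      rw [hd, ← Module.finrank_mul_finrank ℝ ℂ (EuclideanSpace ℂ (Fin (2^s))),
        Complex.finrank_real_complex, finrank_euclideanSpace_fin, pow_succ, mul_comm]
    have hdpos : 0 < d := by rw [hdval]; positivity
    set r : ℝ := Real.sqrt (2 - 2*δ) / 2 with hr
    have h2δ : (0:ℝ) < 2 - 2*δ := by linarith
    have hrpos : 0 < r := by rw [hr]; positivity
    set e := (stdOrthonormalBasis ℝ (EuclideanSpace ℂ (Fin (2^s)))).repr with he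
    set φ : X → EuclideanSpace ℝ (Fin d) := fun w => e (ψ w) with hφ
    have hnorm : ∀ w, ‖φ w‖ = 1 := fun w => by
      rw [hφ]; simp only [e.norm_map, hunit w]
    have hdist : ∀ w w', w ≠ w' → 2 * r ≤ dist (φ w) (φ w') := by
      intro w w' hww'
      have hdψ : dist (φ w) (φ w') = ‖ψ w - ψ w'‖ := by
        rw [hφ]; simp only [dist_eq_norm, ← map_sub, e.norm_map]
      have hsq : ‖ψ w - ψ w'‖^2 = 2 - 2 * (⟪ψ w, ψ w'⟫_ℂ).re := by
        have h := @norm_sub_sq ℂ _ _ _ _ (ψ w) (ψ w')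
        simp only [hunit w, hunit w', one_pow, RCLike.re_to_complex] at h
        rw [h]; ring
      have hre : (⟪ψ w, ψ w'⟫_ℂ).re ≤ δ := by
        refine le_trans (Complex.re_le_norm _) ?_
        exact hres w w' hww'
      have hsqge : 2 - 2*δ ≤ ‖ψ w - ψ w'‖^2 := by rw [hsq]; linarith
      have hge : Real.sqrt (2 - 2*δ) ≤ ‖ψ w - ψ w'‖ := by
        calc Real.sqrt (2 - 2*δ) ≤ Real.sqrt (‖ψ w - ψ w'‖^2) := Real.sqrt_le_sqrt hsqge
          _ = ‖ψ w - ψ w'‖ := Real.sqrt_sq (norm_nonneg _)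
      rw [hdψ, hr]; linarith
    have hpack := packing_aux hdpos φ r hrpos hnorm hdist
    rw [hK] at hpack
    have hs0 : Real.sqrt (2 - 2*δ) ≠ 0 := by positivity
    have hsqrt : Real.sqrt (2 / (1-δ)) = 2 / Real.sqrt (2 - 2*δ) := by
      rw [show (2:ℝ)/(1-δ) = 4/(2-2*δ) by rw [div_eq_div_iff h1δ.ne' h2δ.ne']; ring]
      rw [Real.sqrt_div (by norm_num : (0:ℝ) ≤ 4),
        show (4:ℝ) = 2^2 by norm_num, Real.sqrt_sq (by norm_num)]
    have hcr : (1 + r) / r = c := by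
      rw [hc, hr, hsqrt]
      field_simp
      ring
    have hfin : (K:ℝ) ≤ ((1+r)/r)^d := by
      rw [div_pow, le_div_iff₀ (by positivity)]
      exact hpack
    rwa [hcr, hdval] at hfin
  -- log arithmetic
  rcases le_or_gt K 1 with hKle | hKgt
  · have hlogK : Real.logb 2 (K:ℝ) = 0 := by
      interval_cases K
      · simp
      · simp
    rw [hlogK, Real.logb_zero]
    have hLL : 0 < Real.logb 2 (Real.logb 2 c) := Real.logb_pos (by norm_num) hL1
    have hs : (0:ℝ) ≤ s := Nat.cast_nonneg s
    linarith
  · have hK2 : (2:ℝ) ≤ (K:ℝ) := by exact_mod_cast hKgt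
    have hlogK0 : 0 < Real.logb 2 (K:ℝ) := Real.logb_pos (by norm_num) (by linarith)
    have hlog1 : Real.logb 2 (K:ℝ) ≤ (2^(s+1) : ℕ) * Real.logb 2 c := by
      have h := Real.logb_le_logb_of_le (b := 2) (by norm_num) (by linarith) hKbound
      rwa [Real.logb_pow] at h
    have hquot : Real.logb 2 (K:ℝ) / Real.logb 2 c ≤ (2:ℝ)^(s+1) := by
      rw [div_le_iff₀ hL0]
      calc Real.logb 2 (K:ℝ) ≤ (2^(s+1) : ℕ) * Real.logb 2 c := hlog1
        _ = (2:ℝ)^(s+1) * Real.logb 2 c := by push_cast; ring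
    have hquot0 : 0 < Real.logb 2 (K:ℝ) / Real.logb 2 c := div_pos hlogK0 hL0
    have hfinal : Real.logb 2 (Real.logb 2 (K:ℝ) / Real.logb 2 c) ≤ (s:ℝ) + 1 := by
      calc Real.logb 2 (Real.logb 2 (K:ℝ) / Real.logb 2 c)
          ≤ Real.logb 2 ((2:ℝ)^(s+1)) := Real.logb_le_logb_of_le (by norm_num) hquot0 hquot
        _ = (s:ℝ) + 1 := by
            rw [Real.logb_pow, Real.logb_self_eq_one (by norm_num)]
            push_cast; ring
    rw [Real.logb_div hlogK0.ne' hL0.ne'] at hfinal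
    linarith
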